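/- Let $\tilde E$ be a locally compact separable metric space and $\tilde{\mathcal C}\subset C_0(\tilde E)$ a linear subspace satisfying: for every $f\in C_0(\tilde E)$ there exists $\tilde f\in\tilde{\mathcal C}$ such that for every $\varepsilon>0$ there exists $f_\varepsilon\in\tilde{\mathcal C}$ with $|f-f_\varepsilon|\le\varepsilon\tilde f$ pointwise. Then for any positive linear functional $\Lambda:\tilde{\mathcal C}\to\mathbb R$ there exists a unique locally finite Borel measure $\mu$ on $\tilde E$ with $\int f\,d\mu=\Lambda(f)$ for all $f\in\tilde{\mathcal C}$. -/

import Mathlib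

open MeasureTheory Set TopologicalSpace
open scoped ENNReal NNReal

namespace RMK

lemma aux_le {a b c : ℝ} (hc : 0 ≤ c) (h : ∀ ε : ℝ, 0 < ε → a ≤ b + ε * c) : a ≤ b := by
  by_contra hab; push_neg at hab
  rcases eq_or_lt_of_le hc with hc0 | hc0
  · have := h 1 one_pos; nlinarith
  · have hab' : 0 < a - b := by linarith
    have h2 := h ((a - b) / (2 * c)) (by positivity)
    have h3 : (a - b) / (2 * c) * c = (a - b) / 2 := by field_simp
    rw [h3] at h2; linarith

structure Setup (E : Type*) [TopologicalSpace E] where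
  C : Set (E → ℝ)
  Λ : (E → ℝ) → ℝ
  cont : ∀ f ∈ C, Continuous f
  supp : ∀ f ∈ C, HasCompactSupport f
  add_mem : ∀ f ∈ C, ∀ g ∈ C, f + g ∈ C
  smul_mem : ∀ (a : ℝ), ∀ f ∈ C, a • f ∈ C
  hA : ∀ f : E → ℝ, Continuous f → HasCompactSupport f →
      ∃ ftil ∈ C, ∀ ε > (0:ℝ), ∃ fε ∈ C, ∀ x, |f x - fε x| ≤ ε * ftil x
  Λadd : ∀ f ∈ C, ∀ g ∈ C, Λ (f + g) = Λ f + Λ g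
  Λsmul : ∀ (a : ℝ), ∀ f ∈ C, Λ (a • f) = a * Λ f
  Λpos : ∀ f ∈ C, (∀ x, 0 ≤ f x) → 0 ≤ Λ f

namespace Setup

variable {E : Type*} [TopologicalSpace E] (S : Setup E)

lemma zero_mem : (0 : E → ℝ) ∈ S.C := by
  obtain ⟨t, htC, -⟩ := S.hA 0 continuous_const (by
    simp [HasCompactSupport, tsupport, Function.support])
  have : (0 : E → ℝ) = (0 : ℝ) • t := by funext x; simp
  rw [this]; exact S.smul_mem 0 t htC

lemma Λ_zero : S.Λ 0 = 0 := by
  have h := S.Λsmul 0 0 S.zero_mem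
  simpa using h

lemma sub_mem {f g : E → ℝ} (hf : f ∈ S.C) (hg : g ∈ S.C) : f - g ∈ S.C := by
  have : f - g = f + (-1 : ℝ) • g := by funext x; simp; ring
  rw [this]; exact S.add_mem f hf _ (S.smul_mem (-1) g hg)

lemma Λ_sub {f g : E → ℝ} (hf : f ∈ S.C) (hg : g ∈ S.C) : S.Λ (f - g) = S.Λ f - S.Λ g := by
  have e : f - g = f + (-1 : ℝ) • g := by funext x; simp; ring
  rw [e, S.Λadd f hf _ (S.smul_mem (-1) g hg), S.Λsmul (-1) g hg]; ring

lemma Λ_mono {f g : E → ℝ} (hf : f ∈ S.C) (hg : g ∈ S.C) (h : ∀ x, f x ≤ g x) :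
    S.Λ f ≤ S.Λ g := by
  have h0 : 0 ≤ S.Λ (g - f) := S.Λpos _ (S.sub_mem hg hf) (fun x => by
    simpa using sub_nonneg.2 (h x))
  rw [S.Λ_sub hg hf] at h0; linarith

/-- The approximation data from assumption (A), with nonnegativity of the dominating function. -/
lemma approx {f : E → ℝ} (hf : Continuous f) (hsupp : HasCompactSupport f) :
    ∃ t ∈ S.C, (∀ x, 0 ≤ t x) ∧
      ∀ ε > (0:ℝ), ∃ g ∈ S.C, ∀ x, |f x - g x| ≤ ε * t x := by
  obtain ⟨t, htC, ht⟩ := S.hA f hf hsupp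
  refine ⟨t, htC, ?_, ht⟩
  intro x
  obtain ⟨g, -, hg⟩ := ht 1 one_pos
  have := hg x
  have := abs_nonneg (f x - g x)
  linarith

/-- The extension of `Λ` to all of `C_c(E)`. -/
noncomputable def LamE (f : E → ℝ) : ℝ :=
  sInf (S.Λ '' {g | g ∈ S.C ∧ ∀ x, f x ≤ g x})

lemma upper_exists {f : E → ℝ} (hf : Continuous f) (hsupp : HasCompactSupport f) :
    ∃ g ∈ S.C, ∀ x, f x ≤ g x := by
  obtain ⟨t, htC, htpos, ht⟩ := S.approx hf hsupp
  obtain ⟨g, hgC, hg⟩ := ht 1 one_pos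
  refine ⟨g + (1:ℝ) • t, S.add_mem g hgC _ (S.smul_mem 1 t htC), fun x => ?_⟩
  have := hg x
  have := abs_le.1 this
  simp only [Pi.add_apply, Pi.smul_apply, smul_eq_mul, one_mul]
  linarith [this.2]

lemma nonempty_upper {f : E → ℝ} (hf : Continuous f) (hsupp : HasCompactSupport f) :
    (S.Λ '' {g | g ∈ S.C ∧ ∀ x, f x ≤ g x}).Nonempty := by
  obtain ⟨g, hgC, hg⟩ := S.upper_exists hf hsupp
  exact ⟨S.Λ g, ⟨g, ⟨hgC, hg⟩, rfl⟩⟩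

lemma bddBelow_upper {f : E → ℝ} (hf : Continuous f) (hsupp : HasCompactSupport f) :
    BddBelow (S.Λ '' {g | g ∈ S.C ∧ ∀ x, f x ≤ g x}) := by
  obtain ⟨t, htC, htpos, ht⟩ := S.approx hf hsupp
  obtain ⟨g, hgC, hg⟩ := ht 1 one_pos
  refine ⟨S.Λ (g - (1:ℝ) • t), ?_⟩
  rintro r ⟨g', ⟨hg'C, hg'⟩, rfl⟩
  refine S.Λ_mono (S.sub_mem hgC (S.smul_mem 1 t htC)) hg'C (fun x => ?_)
  have := (abs_le.1 (hg x)).1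
  have := hg' x
  simp only [Pi.sub_apply, Pi.smul_apply, smul_eq_mul, one_mul]
  linarith

lemma LamE_le {f g : E → ℝ} (hf : Continuous f) (hsupp : HasCompactSupport f)
    (hg : g ∈ S.C) (h : ∀ x, f x ≤ g x) : S.LamE f ≤ S.Λ g :=
  csInf_le (S.bddBelow_upper hf hsupp) ⟨g, ⟨hg, h⟩, rfl⟩

lemma le_LamE {f : E → ℝ} {c : ℝ} (hf : Continuous f) (hsupp : HasCompactSupport f)
    (h : ∀ g ∈ S.C, (∀ x, f x ≤ g x) → c ≤ S.Λ g) : c ≤ S.LamE f := by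
  refine le_csInf (S.nonempty_upper hf hsupp) ?_
  rintro r ⟨g, ⟨hgC, hg⟩, rfl⟩
  exact h g hgC hg

lemma LamE_eq {f : E → ℝ} (hf : f ∈ S.C) : S.LamE f = S.Λ f := by
  refine le_antisymm (S.LamE_le (S.cont f hf) (S.supp f hf) hf (fun x => le_rfl)) ?_
  exact S.le_LamE (S.cont f hf) (S.supp f hf) (fun g hgC hg => S.Λ_mono hf hgC hg)


lemma LamE_mono {f h : E → ℝ} (hf : Continuous f) (hfs : HasCompactSupport f)
    (hh : Continuous h) (hhs : HasCompactSupport h) (hle : ∀ x, f x ≤ h x) :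
    S.LamE f ≤ S.LamE h := by
  refine csInf_le_csInf (S.bddBelow_upper hf hfs) (S.nonempty_upper hh hhs) ?_
  rintro r ⟨g, ⟨hgC, hg⟩, rfl⟩
  exact ⟨g, ⟨hgC, fun x => (hle x).trans (hg x)⟩, rfl⟩

lemma LamE_nonneg {f : E → ℝ} (hf : Continuous f) (hfs : HasCompactSupport f)
    (h0 : ∀ x, 0 ≤ f x) : 0 ≤ S.LamE f :=
  S.le_LamE hf hfs (fun g hgC hg => S.Λpos g hgC (fun x => (h0 x).trans (hg x)))

lemma LamE_zero : S.LamE 0 = 0 := by rw [S.LamE_eq S.zero_mem, S.Λ_zero]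

/-- A sandwich estimate: `LamE f` is within `ε * Λ t` of `Λ g` for the approximants. -/
lemma LamE_sandwich {f t g : E → ℝ} (hf : Continuous f) (hfs : HasCompactSupport f)
    (htC : t ∈ S.C) (htpos : ∀ x, 0 ≤ t x) (hgC : g ∈ S.C) {ε : ℝ} (hε : 0 < ε)
    (h : ∀ x, |f x - g x| ≤ ε * t x) :
    S.Λ g - ε * S.Λ t ≤ S.LamE f ∧ S.LamE f ≤ S.Λ g + ε * S.Λ t := by
  constructor
  · refine S.le_LamE hf hfs (fun g' hg'C hg' => ?_)
    have hmem : g - ε • t ∈ S.C := S.sub_mem hgC (S.smul_mem ε t htC)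
    have hmono : S.Λ (g - ε • t) ≤ S.Λ g' := by
      refine S.Λ_mono hmem hg'C (fun x => ?_)
      have h1 := (abs_le.1 (h x)).1
      have h2 := hg' x
      simp only [Pi.sub_apply, Pi.smul_apply, smul_eq_mul]
      linarith
    rw [S.Λ_sub hgC (S.smul_mem ε t htC), S.Λsmul ε t htC] at hmono
    linarith
  · have hmem : g + ε • t ∈ S.C := S.add_mem g hgC _ (S.smul_mem ε t htC)
    have := S.LamE_le hf hfs hmem (fun x => by
      have h1 := (abs_le.1 (h x)).2
      simp only [Pi.add_apply, Pi.smul_apply, smul_eq_mul]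
      linarith)
    rwa [S.Λadd g hgC _ (S.smul_mem ε t htC), S.Λsmul ε t htC] at this

lemma Λ_nonneg_of_approx {t : E → ℝ} (htC : t ∈ S.C) (htpos : ∀ x, 0 ≤ t x) : 0 ≤ S.Λ t :=
  S.Λpos t htC htpos

lemma LamE_add {f h : E → ℝ} (hf : Continuous f) (hfs : HasCompactSupport f)
    (hh : Continuous h) (hhs : HasCompactSupport h) :
    S.LamE (f + h) = S.LamE f + S.LamE h := by
  obtain ⟨t1, ht1C, ht1pos, ht1⟩ := S.approx hf hfs
  obtain ⟨t2, ht2C, ht2pos, ht2⟩ := S.approx hh hhs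
  have hfh : Continuous (f + h) := hf.add hh
  have hfhs : HasCompactSupport (f + h) := hfs.add hhs
  have hΛt1 : 0 ≤ S.Λ t1 := S.Λpos t1 ht1C ht1pos
  have hΛt2 : 0 ≤ S.Λ t2 := S.Λpos t2 ht2C ht2pos
  refine le_antisymm ?_ ?_
  · -- ≤ : use near-optimal upper functions for f and h
    refine aux_le (c := 1) zero_le_one (fun ε hε => ?_)
    obtain ⟨r1, hr1, hr1lt⟩ := Real.lt_sInf_add_pos (S.nonempty_upper hf hfs) (half_pos hε)
    obtain ⟨r2, hr2, hr2lt⟩ := Real.lt_sInf_add_pos (S.nonempty_upper hh hhs) (half_pos hε)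
    obtain ⟨g1, ⟨hg1C, hg1⟩, rfl⟩ := hr1
    obtain ⟨g2, ⟨hg2C, hg2⟩, rfl⟩ := hr2
    have : S.LamE (f + h) ≤ S.Λ (g1 + g2) :=
      S.LamE_le hfh hfhs (S.add_mem g1 hg1C g2 hg2C)
        (fun x => add_le_add (hg1 x) (hg2 x))
    rw [S.Λadd g1 hg1C g2 hg2C] at this
    simp only [mul_one]
    calc S.LamE (f + h) ≤ S.Λ g1 + S.Λ g2 := this
      _ ≤ (S.LamE f + ε/2) + (S.LamE h + ε/2) := add_le_add hr1lt.le hr2lt.le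
      _ = S.LamE f + S.LamE h + ε := by ring
  · -- ≥
    refine S.le_LamE hfh hfhs (fun g hgC hg => ?_)
    refine aux_le (c := 2 * (S.Λ t1 + S.Λ t2)) (by linarith) (fun ε hε => ?_)
    obtain ⟨g1, hg1C, hg1⟩ := ht1 ε hε
    obtain ⟨g2, hg2C, hg2⟩ := ht2 ε hε
    have s1 := S.LamE_sandwich hf hfs ht1C ht1pos hg1C hε hg1
    have s2 := S.LamE_sandwich hh hhs ht2C ht2pos hg2C hε hg2
    -- g ≥ f + h ≥ (g1 - ε t1) + (g2 - ε t2)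
    have hmem : (g1 - ε • t1) + (g2 - ε • t2) ∈ S.C :=
      S.add_mem _ (S.sub_mem hg1C (S.smul_mem ε t1 ht1C)) _
        (S.sub_mem hg2C (S.smul_mem ε t2 ht2C))
    have hmono : S.Λ ((g1 - ε • t1) + (g2 - ε • t2)) ≤ S.Λ g := by
      refine S.Λ_mono hmem hgC (fun x => ?_)
      have h1 := (abs_le.1 (hg1 x)).1
      have h2 := (abs_le.1 (hg2 x)).1
      have h3 := hg x
      simp only [Pi.add_apply, Pi.sub_apply, Pi.smul_apply, smul_eq_mul] at h3 ⊢
      linarith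
    rw [S.Λadd _ (S.sub_mem hg1C (S.smul_mem ε t1 ht1C)) _
      (S.sub_mem hg2C (S.smul_mem ε t2 ht2C)),
      S.Λ_sub hg1C (S.smul_mem ε t1 ht1C), S.Λ_sub hg2C (S.smul_mem ε t2 ht2C),
      S.Λsmul ε t1 ht1C, S.Λsmul ε t2 ht2C] at hmono
    have u1 := s1.2
    have u2 := s2.2
    linarith

lemma LamE_smul {f : E → ℝ} (hf : Continuous f) (hfs : HasCompactSupport f)
    {c : ℝ} (hc : 0 ≤ c) : S.LamE (c • f) = c * S.LamE f := by
  rcases eq_or_lt_of_le hc with rfl | hc0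
  · have : (0:ℝ) • f = 0 := by funext x; simp
    rw [this, S.LamE_zero, zero_mul]
  have hcf : Continuous (c • f) := hf.const_smul c
  have hcfs : HasCompactSupport (c • f) := hfs.smul_left
  refine le_antisymm ?_ ?_
  · -- LamE (c•f) ≤ c * LamE f
    rw [← sub_nonneg]
    have key : ∀ g ∈ S.C, (∀ x, f x ≤ g x) → S.LamE (c • f) / c ≤ S.Λ g := by
      intro g hgC hg
      have : S.LamE (c • f) ≤ S.Λ (c • g) :=
        S.LamE_le hcf hcfs (S.smul_mem c g hgC) (fun x => by
          simp only [Pi.smul_apply, smul_eq_mul]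
          exact mul_le_mul_of_nonneg_left (hg x) hc)
      rw [S.Λsmul c g hgC] at this
      rw [div_le_iff₀ hc0]; linarith [mul_comm (S.Λ g) c]
    have := S.le_LamE hf hfs key
    rw [div_le_iff₀ hc0] at this
    nlinarith
  · -- c * LamE f ≤ LamE (c•f)
    refine S.le_LamE hcf hcfs (fun g hgC hg => ?_)
    have hmem : c⁻¹ • g ∈ S.C := S.smul_mem c⁻¹ g hgC
    have : S.LamE f ≤ S.Λ (c⁻¹ • g) := by
      refine S.LamE_le hf hfs hmem (fun x => ?_)
      have := hg x
      simp only [Pi.smul_apply, smul_eq_mul] at this ⊢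
      rw [le_inv_mul_iff₀ hc0]
      linarith [mul_comm c (f x)]
    rw [S.Λsmul c⁻¹ g hgC] at this
    have := mul_le_mul_of_nonneg_left this hc
    rwa [← mul_assoc, mul_inv_cancel₀ (ne_of_gt hc0), one_mul] at this


section Content

variable {E : Type*} [MetricSpace E] [LocallyCompactSpace E] (S : Setup E)

/-- Test functions for the content of a compact set `K`. -/
def Tset (K : Set E) : Set (E → ℝ) :=
  {g | Continuous g ∧ HasCompactSupport g ∧ (∀ x, 0 ≤ g x) ∧ ∀ x ∈ K, 1 ≤ g x}

/-- The content of a compact set. -/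
noncomputable def lam0 (K : Set E) : ℝ := sInf (S.LamE '' Tset K)

lemma hcs_zero : HasCompactSupport (0 : E → ℝ) := by
  simp [HasCompactSupport, tsupport, Function.support]

lemma hcs_const_smul {g : E → ℝ} (hg : HasCompactSupport g) (c : ℝ) :
    HasCompactSupport (c • g) := by
  refine hg.mono (fun x hx => ?_)
  simp only [Function.mem_support, Pi.smul_apply, smul_eq_mul] at hx ⊢
  intro h0
  apply hx
  rw [h0, mul_zero]

lemma hcs_sum {ι : Type*} (s : Finset ι) (g : ι → E → ℝ)
    (h : ∀ i ∈ s, HasCompactSupport (g i)) :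
    HasCompactSupport (fun x => ∑ i ∈ s, g i x) := by
  classical
  induction s using Finset.cons_induction with
  | empty => simp only [Finset.sum_empty]; exact hcs_zero
  | cons a s ha ih =>
    have h2 : (fun x => ∑ i ∈ Finset.cons a s ha, g i x) =
        g a + fun x => ∑ i ∈ s, g i x := by
      funext x; rw [Finset.sum_cons]; rfl
    rw [h2]
    exact (h a (Finset.mem_cons_self a s)).add
      (ih (fun i hi => h i (Finset.mem_cons_of_mem hi)))

lemma LamE_sum {ι : Type*} (s : Finset ι) (g : ι → E → ℝ)
    (hc : ∀ i ∈ s, Continuous (g i)) (hs : ∀ i ∈ s, HasCompactSupport (g i)) :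
    S.LamE (fun x => ∑ i ∈ s, g i x) = ∑ i ∈ s, S.LamE (g i) := by
  classical
  induction s using Finset.cons_induction with
  | empty => simp only [Finset.sum_empty]; exact S.LamE_zero
  | cons a s ha ih =>
    have hcsum : Continuous (fun x => ∑ i ∈ s, g i x) :=
      continuous_finset_sum s (fun i hi => hc i (Finset.mem_cons_of_mem hi))
    have hssum : HasCompactSupport (fun x => ∑ i ∈ s, g i x) :=
      hcs_sum s g (fun i hi => hs i (Finset.mem_cons_of_mem hi))
    have h2 : (fun x => ∑ i ∈ Finset.cons a s ha, g i x) =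
        g a + fun x => ∑ i ∈ s, g i x := by
      funext x; rw [Finset.sum_cons]; rfl
    rw [h2, S.LamE_add (hc a (Finset.mem_cons_self a s)) (hs a (Finset.mem_cons_self a s))
        hcsum hssum,
      ih (fun i hi => hc i (Finset.mem_cons_of_mem hi))
        (fun i hi => hs i (Finset.mem_cons_of_mem hi)), Finset.sum_cons]

lemma Tset_nonempty {K : Set E} (hK : IsCompact K) : (Tset K).Nonempty := by
  obtain ⟨f, hf1, -, hfs, hficc⟩ :=
    exists_continuous_one_zero_of_isCompact hK isClosed_empty (by simp)
  exact ⟨⇑f, f.continuous, hfs, fun x => (hficc x).1, fun x hx => (hf1 hx).ge⟩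

lemma image_nonempty {K : Set E} (hK : IsCompact K) : (S.LamE '' Tset K).Nonempty :=
  ((Tset_nonempty hK).image _)

lemma bddBelow_image (K : Set E) : BddBelow (S.LamE '' Tset K) := by
  refine ⟨0, ?_⟩
  rintro r ⟨g, ⟨hgc, hgs, hg0, -⟩, rfl⟩
  exact S.LamE_nonneg hgc hgs hg0

lemma lam0_nonneg {K : Set E} (hK : IsCompact K) : 0 ≤ S.lam0 K := by
  refine le_csInf (S.image_nonempty hK) ?_
  rintro r ⟨g, ⟨hgc, hgs, hg0, -⟩, rfl⟩
  exact S.LamE_nonneg hgc hgs hg0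

lemma lam0_le {K : Set E} {g : E → ℝ} (hg : g ∈ Tset K) : S.lam0 K ≤ S.LamE g :=
  csInf_le (S.bddBelow_image K) ⟨g, hg, rfl⟩

lemma le_lam0 {K : Set E} {c : ℝ} (hK : IsCompact K)
    (h : ∀ g ∈ Tset K, c ≤ S.LamE g) : c ≤ S.lam0 K := by
  refine le_csInf (S.image_nonempty hK) ?_
  rintro r ⟨g, hg, rfl⟩
  exact h g hg

lemma lam0_mono {K1 K2 : Set E} (hK2 : IsCompact K2) (h : K1 ⊆ K2) :
    S.lam0 K1 ≤ S.lam0 K2 := by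
  refine csInf_le_csInf (S.bddBelow_image K1) (S.image_nonempty hK2) ?_
  rintro r ⟨g, ⟨hgc, hgs, hg0, hg1⟩, rfl⟩
  exact ⟨g, ⟨hgc, hgs, hg0, fun x hx => hg1 x (h hx)⟩, rfl⟩

lemma lam0_union_le {K1 K2 : Set E} (hK1 : IsCompact K1) (hK2 : IsCompact K2) :
    S.lam0 (K1 ∪ K2) ≤ S.lam0 K1 + S.lam0 K2 := by
  refine aux_le (c := 1) zero_le_one (fun ε hε => ?_)
  obtain ⟨r1, hr1, hr1lt⟩ := Real.lt_sInf_add_pos (S.image_nonempty hK1) (half_pos hε)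
  obtain ⟨r2, hr2, hr2lt⟩ := Real.lt_sInf_add_pos (S.image_nonempty hK2) (half_pos hε)
  obtain ⟨g1, ⟨h1c, h1s, h10, h11⟩, rfl⟩ := hr1
  obtain ⟨g2, ⟨h2c, h2s, h20, h21⟩, rfl⟩ := hr2
  have hsum : g1 + g2 ∈ Tset (K1 ∪ K2) := by
    refine ⟨h1c.add h2c, h1s.add h2s, fun x => by
      simpa using add_nonneg (h10 x) (h20 x), fun x hx => ?_⟩
    rcases hx with hx | hx
    · have := h11 x hx; have := h20 x; simp only [Pi.add_apply]; linarith
    · have := h21 x hx; have := h10 x; simp only [Pi.add_apply]; linarith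
  have := S.lam0_le hsum
  rw [S.LamE_add h1c h1s h2c h2s] at this
  have h1' := hr1lt.le
  have h2' := hr2lt.le
  simp only [mul_one]
  calc S.lam0 (K1 ∪ K2) ≤ S.LamE g1 + S.LamE g2 := this
    _ ≤ (S.lam0 K1 + ε/2) + (S.lam0 K2 + ε/2) := add_le_add h1' h2'
    _ = S.lam0 K1 + S.lam0 K2 + ε := by ring

lemma lam0_union_disjoint {K1 K2 : Set E} (hK1 : IsCompact K1) (hK2 : IsCompact K2)
    (hd : Disjoint K1 K2) : S.lam0 (K1 ∪ K2) = S.lam0 K1 + S.lam0 K2 := by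
  refine le_antisymm (S.lam0_union_le hK1 hK2) ?_
  refine S.le_lam0 (hK1.union hK2) (fun g hg => ?_)
  obtain ⟨hgc, hgs, hg0, hg1⟩ := hg
  obtain ⟨φ, hφ1, hφ0, hφs, hφicc⟩ :=
    exists_continuous_one_zero_of_isCompact hK1 hK2.isClosed hd
  set g1 : E → ℝ := fun x => g x * φ x with hg1def
  set g2 : E → ℝ := fun x => g x * (1 - φ x) with hg2def
  have hg1c : Continuous g1 := hgc.mul φ.continuous
  have hg2c : Continuous g2 := hgc.mul (continuous_const.sub φ.continuous)
  have hg1s : HasCompactSupport g1 := hgs.mul_right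
  have hg2s : HasCompactSupport g2 := hgs.mul_right
  have hg1T : g1 ∈ Tset K1 := by
    refine ⟨hg1c, hg1s, fun x => mul_nonneg (hg0 x) (hφicc x).1, fun x hx => ?_⟩
    have h1 := hg1 x (Or.inl hx)
    have h2 : φ x = 1 := hφ1 hx
    simp only [hg1def, h2, mul_one]
    exact h1
  have hg2T : g2 ∈ Tset K2 := by
    refine ⟨hg2c, hg2s, fun x => mul_nonneg (hg0 x) (by linarith [(hφicc x).2]),
      fun x hx => ?_⟩
    have h1 := hg1 x (Or.inr hx)
    have h2 : φ x = 0 := hφ0 hx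
    simp only [hg2def, h2, sub_zero, mul_one]
    exact h1
  have hsum : g = g1 + g2 := by funext x; simp only [hg1def, hg2def, Pi.add_apply]; ring
  have := S.LamE_add hg1c hg1s hg2c hg2s
  rw [← hsum] at this
  rw [this]
  exact add_le_add (S.lam0_le hg1T) (S.lam0_le hg2T)

/-- The bundled content associated with the extended functional. -/
noncomputable def content : MeasureTheory.Content E where
  toFun K := Real.toNNReal (S.lam0 K)
  mono' K1 K2 h := Real.toNNReal_mono (S.lam0_mono K2.2 h)
  sup_disjoint' K1 K2 hd _ _ := by
    show Real.toNNReal (S.lam0 ((K1 ⊔ K2 : Compacts E) : Set E)) = _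
    rw [Compacts.coe_sup]
    have h : S.lam0 ((K1 : Set E) ∪ (K2 : Set E)) =
        S.lam0 (K1 : Set E) + S.lam0 (K2 : Set E) :=
      S.lam0_union_disjoint K1.2 K2.2 hd
    rw [h]
    exact Real.toNNReal_add (S.lam0_nonneg K1.2) (S.lam0_nonneg K2.2)
  sup_le' K1 K2 := by
    show Real.toNNReal (S.lam0 ((K1 ⊔ K2 : Compacts E) : Set E)) ≤ _
    rw [Compacts.coe_sup]
    have h : S.lam0 ((K1 : Set E) ∪ (K2 : Set E)) ≤
        S.lam0 (K1 : Set E) + S.lam0 (K2 : Set E) := S.lam0_union_le K1.2 K2.2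
    calc Real.toNNReal (S.lam0 ((K1 : Set E) ∪ (K2 : Set E)))
        ≤ Real.toNNReal (S.lam0 K1 + S.lam0 K2) :=
          Real.toNNReal_mono h
      _ = Real.toNNReal (S.lam0 K1) + Real.toNNReal (S.lam0 K2) :=
          Real.toNNReal_add (S.lam0_nonneg K1.2) (S.lam0_nonneg K2.2)

lemma content_apply (K : Compacts E) :
    S.content K = ENNReal.ofReal (S.lam0 K) := rfl

lemma contentRegular : MeasureTheory.Content.ContentRegular S.content := by
  intro K
  refine le_antisymm ?_ ?_
  · refine le_iInf fun K' => le_iInf fun hK' => ?_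
    exact S.content.mono K K' (hK'.trans interior_subset)
  · refine ENNReal.le_of_forall_pos_le_add (fun ε hε _ => ?_)
    set a := S.lam0 (K : Set E) with ha
    have ha0 : 0 ≤ a := S.lam0_nonneg K.2
    set εr : ℝ := (ε : ℝ) with hεr
    have hεr0 : 0 < εr := hε
    -- choose a near-optimal test function for K
    obtain ⟨r, hr, hrlt⟩ := Real.lt_sInf_add_pos (S.image_nonempty K.2) (half_pos hεr0)
    obtain ⟨g, ⟨hgc, hgs, hg0, hg1⟩, rfl⟩ := hr
    set δ : ℝ := (εr / 2) / (a + εr) with hδdef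
    have hδ0 : 0 < δ := by positivity
    have hδ1 : δ < 1 := by
      rw [hδdef, div_lt_one (by positivity)]; linarith
    have h1δ : 0 < 1 - δ := by linarith
    -- the enlarged compact set
    set K' : Set E := {x | 1 - δ ≤ g x} with hK'def
    have hK'closed : IsClosed K' := isClosed_le continuous_const hgc
    have hK'sub : K' ⊆ tsupport g := by
      intro x hx
      apply subset_tsupport
      have : 1 - δ ≤ g x := hx
      intro h0
      rw [h0] at this; linarith
    have hK'comp : IsCompact K' := hgs.of_isClosed_subset hK'closed hK'sub
    have hKint : (K : Set E) ⊆ interior K' := by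
      have hopen : IsOpen {x | 1 - δ < g x} := isOpen_lt continuous_const hgc
      have hsub2 : {x | 1 - δ < g x} ⊆ K' := fun x hx => show 1 - δ ≤ g x from le_of_lt hx
      refine fun x hx => interior_maximal hsub2 hopen ?_
      have := hg1 x hx
      show 1 - δ < g x
      linarith
    -- test function for K'
    have hmemT : (1 - δ)⁻¹ • g ∈ Tset K' := by
      refine ⟨?_, hcs_const_smul hgs _, fun x => ?_, fun x hx => ?_⟩
      · show Continuous fun x => (1 - δ)⁻¹ • g x
        exact hgc.const_smul ((1 - δ)⁻¹)
      · simp only [Pi.smul_apply, smul_eq_mul]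
        exact mul_nonneg (by positivity) (hg0 x)
      · have hx' : 1 - δ ≤ g x := hx
        simp only [Pi.smul_apply, smul_eq_mul]
        calc (1:ℝ) = (1 - δ)⁻¹ * (1 - δ) := (inv_mul_cancel₀ (ne_of_gt h1δ)).symm
          _ ≤ (1 - δ)⁻¹ * g x := mul_le_mul_of_nonneg_left hx' (by positivity)
    have hlam0K' : S.lam0 K' ≤ a + εr := by
      have h1 := S.lam0_le hmemT
      rw [S.LamE_smul hgc hgs (by positivity)] at h1
      have h2 : S.LamE g ≤ a + εr / 2 := hrlt.le
      have h3 : (1 - δ)⁻¹ * S.LamE g ≤ (1 - δ)⁻¹ * (a + εr / 2) :=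
        mul_le_mul_of_nonneg_left h2 (by positivity)
      have h4 : (1 - δ) * (a + εr) = a + εr / 2 := by
        rw [hδdef]; field_simp; ring
      have h5 : (1 - δ)⁻¹ * (a + εr / 2) = a + εr := by
        rw [← h4, ← mul_assoc, inv_mul_cancel₀ (ne_of_gt h1δ), one_mul]
      linarith
    -- conclude in ℝ≥0∞
    have : (⨅ (K'' : Compacts E) (_ : (K : Set E) ⊆ interior (K'' : Set E)),
        S.content K'') ≤ S.content ⟨K', hK'comp⟩ := by
      refine iInf_le_of_le ⟨K', hK'comp⟩ ?_
      exact iInf_le_of_le hKint le_rfl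
    refine this.trans ?_
    rw [content_apply, content_apply]
    calc ENNReal.ofReal (S.lam0 K') ≤ ENNReal.ofReal (a + εr) :=
          ENNReal.ofReal_le_ofReal hlam0K'
      _ = ENNReal.ofReal a + ENNReal.ofReal εr := ENNReal.ofReal_add ha0 hεr0.le
      _ = ENNReal.ofReal a + (ε : ℝ≥0∞) := by
          rw [hεr, ENNReal.ofReal_coe_nnreal]

/-- The representing measure. -/
noncomputable def mu [MeasurableSpace E] [BorelSpace E] : Measure E :=
  S.content.measure

lemma mu_compacts [MeasurableSpace E] [BorelSpace E] (K : Compacts E) :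
    S.mu K = ENNReal.ofReal (S.lam0 K) :=
  (S.content.measure_eq_content_of_regular S.contentRegular K)

instance mu_finiteOnCompacts [MeasurableSpace E] [BorelSpace E] :
    IsFiniteMeasureOnCompacts S.mu := by
  constructor
  intro K hK
  exact (S.mu_compacts ⟨K, hK⟩).trans_lt ENNReal.ofReal_lt_top

lemma LamE_le_mul_lam0 {K : Set E} (hK : IsCompact K) {g : E → ℝ}
    (hgc : Continuous g) (hgs : HasCompactSupport g) {ε : ℝ} (hε : 0 < ε)
    (hg0 : ∀ x, 0 ≤ g x) (hgle : ∀ x, g x ≤ ε) (hgK : ∀ x, x ∉ K → g x = 0) :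
    S.LamE g ≤ ε * S.lam0 K := by
  have key : ∀ g' ∈ Tset K, S.LamE g / ε ≤ S.LamE g' := by
    rintro g' ⟨h'c, h's, h'0, h'1⟩
    have hle : ∀ x, g x ≤ (ε • g') x := by
      intro x
      simp only [Pi.smul_apply, smul_eq_mul]
      by_cases hx : x ∈ K
      · calc g x ≤ ε := hgle x
          _ = ε * 1 := (mul_one ε).symm
          _ ≤ ε * g' x := mul_le_mul_of_nonneg_left (h'1 x hx) hε.le
      · rw [hgK x hx]; exact mul_nonneg hε.le (h'0 x)
    have hcont2 : Continuous (ε • g') := by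
      show Continuous fun x => ε • g' x
      exact h'c.const_smul ε
    have hsupp2 : HasCompactSupport (ε • g') := hcs_const_smul h's ε
    have hm := S.LamE_mono hgc hgs hcont2 hsupp2 hle
    rw [S.LamE_smul h'c h's hε.le] at hm
    rw [div_le_iff₀ hε]
    linarith [mul_comm (S.LamE g') ε]
  have h2 : S.LamE g / ε ≤ S.lam0 K := S.le_lam0 hK key
  rw [div_le_iff₀ hε] at h2
  linarith [mul_comm (S.lam0 K) ε]

lemma mul_lam0_le_LamE {K : Set E} (hK : IsCompact K) {g : E → ℝ}
    (hgc : Continuous g) (hgs : HasCompactSupport g) {ε : ℝ} (hε : 0 < ε)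
    (hg0 : ∀ x, 0 ≤ g x) (hg1 : ∀ x ∈ K, ε ≤ g x) :
    ε * S.lam0 K ≤ S.LamE g := by
  have hmem : ε⁻¹ • g ∈ Tset K := by
    refine ⟨?_, hcs_const_smul hgs _, fun x => ?_, fun x hx => ?_⟩
    · show Continuous fun x => ε⁻¹ • g x
      exact hgc.const_smul ε⁻¹
    · simp only [Pi.smul_apply, smul_eq_mul]
      exact mul_nonneg (by positivity) (hg0 x)
    · simp only [Pi.smul_apply, smul_eq_mul]
      calc (1:ℝ) = ε⁻¹ * ε := (inv_mul_cancel₀ (ne_of_gt hε)).symm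
        _ ≤ ε⁻¹ * g x := mul_le_mul_of_nonneg_left (hg1 x hx) (by positivity)
  have h1 := S.lam0_le hmem
  rw [S.LamE_smul hgc hgs (by positivity)] at h1
  have := mul_le_mul_of_nonneg_left h1 hε.le
  rwa [← mul_assoc, mul_inv_cancel₀ (ne_of_gt hε), one_mul] at this

section Integral

variable [MeasurableSpace E] [BorelSpace E] [Nonempty E]

lemma integral_eq_LamE_nonneg {f : E → ℝ} (hfc : Continuous f)
    (hfs : HasCompactSupport f) (hf0 : ∀ x, 0 ≤ f x) :
    ∫ x, f x ∂S.mu = S.LamE f := by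
  obtain ⟨x0, hx0⟩ := hfc.exists_forall_ge_of_hasCompactSupport hfs
  set M : ℝ := f x0 with hM
  set T0 : Set E := tsupport f with hT0def
  have hT0 : IsCompact T0 := hfs
  -- the target: the difference is at most ε * μ(T0) for every ε > 0
  have key : ∀ ε : ℝ, 0 < ε →
      |S.LamE f - ∫ x, f x ∂S.mu| ≤ ε * (S.mu T0).toReal := by
    intro ε hε
    obtain ⟨N, hN⟩ := exists_nat_ge (M / ε)
    have hMN : M ≤ N * ε := by
      rw [div_le_iff₀ hε] at hN; linarith
    -- slices
    set G : ℕ → E → ℝ := fun n x => min (f x) (n * ε) with hGdef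
    set fn : ℕ → E → ℝ := fun n x => G (n + 1) x - G n x with hfndef
    set Cn : ℕ → Set E := fun n => T0 ∩ {x | (n : ℝ) * ε ≤ f x} with hCndef
    have hCncomp : ∀ n, IsCompact (Cn n) :=
      fun n => hT0.inter_right (isClosed_le continuous_const hfc)
    have hCnmeas : ∀ n, MeasurableSet (Cn n) := fun n => (hCncomp n).isClosed.measurableSet
    have hGcont : ∀ n, Continuous (G n) := fun n => hfc.min continuous_const
    have hfncont : ∀ n, Continuous (fn n) := fun n => (hGcont (n+1)).sub (hGcont n)
    have hfnsupp : ∀ n, HasCompactSupport (fn n) := by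
      intro n
      refine hfs.mono (fun x hx => ?_)
      simp only [Function.mem_support] at hx ⊢
      intro hfx
      apply hx
      have h1 : G (n+1) x = 0 := by
        simp only [hGdef, hfx]
        exact min_eq_left (by positivity)
      have h2 : G n x = 0 := by
        simp only [hGdef, hfx]
        exact min_eq_left (by positivity)
      simp [hfndef, h1, h2]
    have hfn0 : ∀ n x, 0 ≤ fn n x := by
      intro n x
      simp only [hfndef, hGdef, sub_nonneg]
      refine min_le_min le_rfl ?_
      have : ((n:ℝ) + 1) * ε = (n:ℝ) * ε + ε := by ring
      push_cast
      nlinarith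
    have hfnle : ∀ n x, fn n x ≤ ε := by
      intro n x
      simp only [hfndef, hGdef]
      have h1 : min (f x) (((n:ℕ):ℝ) * ε + ε) ≤ min (f x + ε) ((n:ℝ) * ε + ε) :=
        min_le_min (by linarith) le_rfl
      have h2 : min (f x + ε) ((n:ℝ) * ε + ε) = min (f x) ((n:ℝ) * ε) + ε :=
        min_add_add_right _ _ _
      have h3 : ((n:ℕ):ℝ) + 1 = ((n+1 : ℕ) : ℝ) := by push_cast; ring
      have h4 : ((n+1 : ℕ):ℝ) * ε = ((n:ℕ):ℝ) * ε + ε := by push_cast; ring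
      rw [h4]
      linarith [h1, h2]
    have hfneq : ∀ n x, x ∈ Cn (n+1) → fn n x = ε := by
      intro n x hx
      have hfx : ((n:ℝ) + 1) * ε ≤ f x := by
        have := hx.2
        simp only [mem_setOf_eq] at this
        push_cast at this ⊢
        linarith
      have h1 : G (n+1) x = ((n:ℝ)+1) * ε := by
        simp only [hGdef]
        rw [min_eq_right]
        · push_cast; ring
        · push_cast; linarith
      have h2 : G n x = (n:ℝ) * ε := by
        simp only [hGdef]
        rw [min_eq_right]
        nlinarith
      simp only [hfndef, h1, h2]; ring
    have hfnzero : ∀ n x, x ∉ Cn n → fn n x = 0 := by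
      intro n x hx
      rcases not_and_or.1 hx with hx | hx
      · have hfx : f x = 0 := image_eq_zero_of_notMem_tsupport hx
        have h1 : G (n+1) x = 0 := by
          simp only [hGdef, hfx]; exact min_eq_left (by positivity)
        have h2 : G n x = 0 := by
          simp only [hGdef, hfx]; exact min_eq_left (by positivity)
        simp [hfndef, h1, h2]
      · simp only [mem_setOf_eq, not_le] at hx
        have h1 : G (n+1) x = f x := by
          simp only [hGdef]
          rw [min_eq_left]
          push_cast
          nlinarith
        have h2 : G n x = f x := by
          simp only [hGdef]
          rw [min_eq_left]
          nlinarith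
        simp [hfndef, h1, h2]
    -- measure values
    set a : ℕ → ℝ := fun n => (S.mu (Cn n)).toReal with hadef
    have hamu : ∀ n, S.mu (Cn n) = ENNReal.ofReal (S.lam0 (Cn n)) :=
      fun n => S.mu_compacts ⟨Cn n, hCncomp n⟩
    have halam : ∀ n, a n = S.lam0 (Cn n) := by
      intro n
      rw [hadef]
      simp only
      rw [hamu n, ENNReal.toReal_ofReal (S.lam0_nonneg (hCncomp n))]
    have ha0 : ∀ n, 0 ≤ a n := fun n => ENNReal.toReal_nonneg
    have hfinite : ∀ n, S.mu (Cn n) ≠ ⊤ := by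
      intro n; rw [hamu n]; exact ENNReal.ofReal_ne_top
    -- integrability
    have hfnint : ∀ n, Integrable (fn n) S.mu :=
      fun n => (hfncont n).integrable_of_hasCompactSupport (hfnsupp n)
    -- integral bounds
    have hintub : ∀ n, ∫ x, fn n x ∂S.mu ≤ ε * a n := by
      intro n
      have hind : Integrable ((Cn n).indicator (fun _ => ε)) S.mu := by
        rw [integrable_indicator_iff (hCnmeas n)]
        exact integrableOn_const (hfinite n)
      have hle : ∀ x, fn n x ≤ (Cn n).indicator (fun _ => ε) x := by
        intro x
        by_cases hx : x ∈ Cn n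
        · rw [indicator_of_mem hx]; exact hfnle n x
        · rw [indicator_of_notMem hx, hfnzero n x hx]
      calc ∫ x, fn n x ∂S.mu ≤ ∫ x, (Cn n).indicator (fun _ => ε) x ∂S.mu :=
            integral_mono (hfnint n) hind hle
        _ = (S.mu (Cn n)).toReal • ε := integral_indicator_const ε (hCnmeas n)
        _ = ε * a n := by rw [hadef]; simp [smul_eq_mul, mul_comm]
    have hintlb : ∀ n, ε * a (n+1) ≤ ∫ x, fn n x ∂S.mu := by
      intro n
      have hind : Integrable ((Cn (n+1)).indicator (fun _ => ε)) S.mu := by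
        rw [integrable_indicator_iff (hCnmeas (n+1))]
        exact integrableOn_const (hfinite (n+1))
      have hle : ∀ x, (Cn (n+1)).indicator (fun _ => ε) x ≤ fn n x := by
        intro x
        by_cases hx : x ∈ Cn (n+1)
        · rw [indicator_of_mem hx, hfneq n x hx]
        · rw [indicator_of_notMem hx]; exact hfn0 n x
      calc ε * a (n+1) = (S.mu (Cn (n+1))).toReal • ε := by
            rw [hadef]; simp [smul_eq_mul, mul_comm]
        _ = ∫ x, (Cn (n+1)).indicator (fun _ => ε) x ∂S.mu :=
            (integral_indicator_const ε (hCnmeas (n+1))).symm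
        _ ≤ ∫ x, fn n x ∂S.mu := integral_mono hind (hfnint n) hle
    -- LamE bounds
    have hLamub : ∀ n, S.LamE (fn n) ≤ ε * a n := by
      intro n
      rw [halam n]
      exact S.LamE_le_mul_lam0 (hCncomp n) (hfncont n) (hfnsupp n) hε (hfn0 n)
        (hfnle n) (hfnzero n)
    have hLamlb : ∀ n, ε * a (n+1) ≤ S.LamE (fn n) := by
      intro n
      rw [halam (n+1)]
      exact S.mul_lam0_le_LamE (hCncomp (n+1)) (hfncont n) (hfnsupp n) hε (hfn0 n)
        (fun x hx => (hfneq n x hx).ge)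
    -- sum decomposition
    have hsum : ∀ x, ∑ n ∈ Finset.range N, fn n x = f x := by
      intro x
      have h1 : ∑ n ∈ Finset.range N, fn n x = G N x - G 0 x := by
        rw [hfndef]
        exact Finset.sum_range_sub (fun k => G k x) N
      rw [h1]
      have h2 : G N x = f x := by
        simp only [hGdef]
        exact min_eq_left (by
          have := hx0 x
          nlinarith)
      have h3 : G 0 x = 0 := by
        simp only [hGdef]
        push_cast
        rw [zero_mul]
        exact min_eq_right (hf0 x)
      rw [h2, h3, sub_zero]
    have hfeq : f = fun x => ∑ n ∈ Finset.range N, fn n x := by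
      funext x
      exact (hsum x).symm
    have hLamsum : S.LamE f = ∑ n ∈ Finset.range N, S.LamE (fn n) := by
      rw [hfeq]
      exact S.LamE_sum (Finset.range N) fn (fun i _ => hfncont i) (fun i _ => hfnsupp i)
    have hintsum : ∫ x, f x ∂S.mu = ∑ n ∈ Finset.range N, ∫ x, fn n x ∂S.mu := by
      rw [hfeq]
      exact integral_finset_sum (Finset.range N) (fun i _ => hfnint i)
    -- final estimate
    have hterm : ∀ n, |S.LamE (fn n) - ∫ x, fn n x ∂S.mu| ≤ ε * a n - ε * a (n+1) := by
      intro n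
      have h1 := hLamub n
      have h2 := hLamlb n
      have h3 := hintub n
      have h4 := hintlb n
      rw [abs_le]
      constructor <;> linarith
    have habs : |S.LamE f - ∫ x, f x ∂S.mu| ≤
        ∑ n ∈ Finset.range N, (ε * a n - ε * a (n+1)) := by
      rw [hLamsum, hintsum, ← Finset.sum_sub_distrib]
      exact (Finset.abs_sum_le_sum_abs _ _).trans (Finset.sum_le_sum (fun n _ => hterm n))
    have htel : ∑ n ∈ Finset.range N, (ε * a n - ε * a (n+1)) = ε * a 0 - ε * a N :=
      Finset.sum_range_sub' (fun n => ε * a n) N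
    have hC0 : Cn 0 = T0 := by
      ext x
      simp only [hCndef, mem_inter_iff, mem_setOf_eq, Nat.cast_zero, zero_mul]
      exact ⟨fun h => h.1, fun h => ⟨h, hf0 x⟩⟩
    have ha0T : a 0 = (S.mu T0).toReal := by rw [hadef]; simp [hC0]
    calc |S.LamE f - ∫ x, f x ∂S.mu| ≤ ε * a 0 - ε * a N := by rw [← htel]; exact habs
      _ ≤ ε * a 0 := by nlinarith [ha0 N]
      _ = ε * (S.mu T0).toReal := by rw [ha0T]
  -- conclude
  have habs : |S.LamE f - ∫ x, f x ∂S.mu| ≤ 0 := by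
    refine aux_le (c := (S.mu T0).toReal) ENNReal.toReal_nonneg (fun ε hε => ?_)
    rw [zero_add]
    exact key ε hε
  have := abs_nonneg (S.LamE f - ∫ x, f x ∂S.mu)
  have heq : S.LamE f - ∫ x, f x ∂S.mu = 0 := by
    rw [← abs_eq_zero]; linarith
  linarith [heq]

lemma integral_eq_LamE {f : E → ℝ} (hfc : Continuous f) (hfs : HasCompactSupport f) :
    ∫ x, f x ∂S.mu = S.LamE f := by
  set fp : E → ℝ := fun x => max (f x) 0 with hfpdef
  set fm : E → ℝ := fun x => max (-f x) 0 with hfmdef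
  have hfpc : Continuous fp := hfc.max continuous_const
  have hfmc : Continuous fm := hfc.neg.max continuous_const
  have hfps : HasCompactSupport fp := by
    refine hfs.mono (fun x hx => ?_)
    simp only [Function.mem_support] at hx ⊢
    intro h0; apply hx
    simp [hfpdef, h0]
  have hfms : HasCompactSupport fm := by
    refine hfs.mono (fun x hx => ?_)
    simp only [Function.mem_support] at hx ⊢
    intro h0; apply hx
    simp [hfmdef, h0]
  have hfp0 : ∀ x, 0 ≤ fp x := fun x => le_max_right _ _
  have hfm0 : ∀ x, 0 ≤ fm x := fun x => le_max_right _ _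
  have hdecomp : ∀ x, f x = fp x - fm x :=
    fun x => (max_zero_sub_max_neg_zero_eq_self (f x)).symm
  have hplus : (f + fm) = fp := by
    funext x
    simp only [Pi.add_apply]
    have := hdecomp x
    linarith
  have hLam : S.LamE f = S.LamE fp - S.LamE fm := by
    have := S.LamE_add hfc hfs hfmc hfms
    rw [hplus] at this
    linarith
  have hip := S.integral_eq_LamE_nonneg hfpc hfps hfp0
  have him := S.integral_eq_LamE_nonneg hfmc hfms hfm0
  have hfint : Integrable f S.mu := hfc.integrable_of_hasCompactSupport hfs
  have hfpint : Integrable fp S.mu := hfpc.integrable_of_hasCompactSupport hfps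
  have hfmint : Integrable fm S.mu := hfmc.integrable_of_hasCompactSupport hfms
  have : ∫ x, f x ∂S.mu = ∫ x, fp x ∂S.mu - ∫ x, fm x ∂S.mu := by
    rw [← integral_sub hfpint hfmint]
    congr 1
    funext x
    exact hdecomp x
  rw [this, hip, him, hLam]

end Integral

lemma integral_eq_LamE_of_rep [MeasurableSpace E] [BorelSpace E]
    (ν : Measure E) [IsFiniteMeasureOnCompacts ν]
    (hrep : ∀ f ∈ S.C, ∫ x, f x ∂ν = S.Λ f)
    {f : E → ℝ} (hfc : Continuous f) (hfs : HasCompactSupport f) :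
    ∫ x, f x ∂ν = S.LamE f := by
  obtain ⟨t, htC, htpos, ht⟩ := S.approx hfc hfs
  have htc : Continuous t := S.cont t htC
  have hts : HasCompactSupport t := S.supp t htC
  have hΛt : 0 ≤ S.Λ t := S.Λpos t htC htpos
  have hfint : Integrable f ν := hfc.integrable_of_hasCompactSupport hfs
  have htint : Integrable t ν := htc.integrable_of_hasCompactSupport hts
  have key : ∀ ε : ℝ, 0 < ε → |(∫ x, f x ∂ν) - S.LamE f| ≤ ε * (2 * S.Λ t) := by
    intro ε hε
    obtain ⟨g, hgC, hg⟩ := ht ε hε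
    have hgc := S.cont g hgC
    have hgs := S.supp g hgC
    have hgint : Integrable g ν := hgc.integrable_of_hasCompactSupport hgs
    have hgΛ : ∫ x, g x ∂ν = S.Λ g := hrep g hgC
    have hint1 : |(∫ x, f x ∂ν) - ∫ x, g x ∂ν| ≤ ε * S.Λ t := by
      rw [← integral_sub hfint hgint]
      have h1 : |∫ x, (f x - g x) ∂ν| ≤ ∫ x, |f x - g x| ∂ν := by
        have := norm_integral_le_integral_norm (μ := ν) (fun x => f x - g x)
        simpa [Real.norm_eq_abs] using this
      have h2 : ∫ x, |f x - g x| ∂ν ≤ ∫ x, ε * t x ∂ν := by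
        refine integral_mono ((hfint.sub hgint).abs) (htint.const_mul ε) (fun x => hg x)
      have h3 : ∫ x, ε * t x ∂ν = ε * ∫ x, t x ∂ν := integral_const_mul ε t
      have h4 : ∫ x, t x ∂ν = S.Λ t := hrep t htC
      calc |∫ x, (f x - g x) ∂ν| ≤ ∫ x, |f x - g x| ∂ν := h1
        _ ≤ ∫ x, ε * t x ∂ν := h2
        _ = ε * S.Λ t := by rw [h3, h4]
    have hsand := S.LamE_sandwich hfc hfs htC htpos hgC hε hg
    have hs1 := hsand.1
    have hs2 := hsand.2
    have hb1 := (abs_le.1 hint1).1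
    have hb2 := (abs_le.1 hint1).2
    rw [abs_le]
    constructor <;> [skip; skip] <;>
      (first
        | (rw [hgΛ] at hb1 hb2 ⊢)
        | skip)
    · nlinarith [hb1, hs2]
    · nlinarith [hb2, hs1]
  have habs : |(∫ x, f x ∂ν) - S.LamE f| ≤ 0 := by
    refine aux_le (c := 2 * S.Λ t) (by linarith) (fun ε hε => ?_)
    rw [zero_add]
    exact key ε hε
  have h0 := abs_nonneg ((∫ x, f x ∂ν) - S.LamE f)
  have heq : (∫ x, f x ∂ν) - S.LamE f = 0 := by
    rw [← abs_eq_zero]; linarith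
  linarith

end Content

end Setup

end RMK

open MeasureTheory

/-- Riesz–Markov type representation: under assumption (A), every positive linear
functional on the subspace `C` of compactly supported continuous functions is
represented by a unique locally finite Borel measure. -/
theorem stmt_0 {E : Type*} [MetricSpace E] [LocallyCompactSpace E]
    [TopologicalSpace.SeparableSpace E] [MeasurableSpace E] [BorelSpace E]
    (C : Set (E → ℝ))
    (hCcont : ∀ f ∈ C, Continuous f) (hCsupp : ∀ f ∈ C, HasCompactSupport f)
    (hCadd : ∀ f ∈ C, ∀ g ∈ C, f + g ∈ C) (hCsmul : ∀ (a : ℝ), ∀ f ∈ C, a • f ∈ C)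
    (hA : ∀ f : E → ℝ, Continuous f → HasCompactSupport f →
      ∃ ftil ∈ C, ∀ ε > (0:ℝ), ∃ fε ∈ C, ∀ x, |f x - fε x| ≤ ε * ftil x)
    (Λ : (E → ℝ) → ℝ)
    (hΛadd : ∀ f ∈ C, ∀ g ∈ C, Λ (f + g) = Λ f + Λ g)
    (hΛsmul : ∀ (a : ℝ), ∀ f ∈ C, Λ (a • f) = a * Λ f)
    (hΛpos : ∀ f ∈ C, (∀ x, 0 ≤ f x) → 0 ≤ Λ f) :
    ∃! μ : Measure E, IsLocallyFiniteMeasure μ ∧ ∀ f ∈ C, ∫ x, f x ∂μ = Λ f := by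
  classical
  rcases isEmpty_or_nonempty E with hE | hE
  · -- empty space: the zero measure works and measures are unique
    refine ⟨0, ⟨inferInstance, ?_⟩, ?_⟩
    · intro f hf
      have hΛf : Λ f = 0 := by
        have h1 : (0:ℝ) • f = f := by
          funext x; exact (IsEmpty.false x).elim
        have h2 := hΛsmul 0 f hf
        rw [h1] at h2
        simpa using h2
      simp [hΛf]
    · intro ν hν
      refine Measure.ext fun s hs => ?_
      have : s = ∅ := Set.eq_empty_of_isEmpty s
      simp [this]
  · set S : RMK.Setup E := ⟨C, Λ, hCcont, hCsupp, hCadd, hCsmul, hA, hΛadd, hΛsmul, hΛpos⟩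
      with hSdef
    haveI : SecondCountableTopology E := UniformSpace.secondCountable_of_separable E
    haveI : IsFiniteMeasureOnCompacts S.mu := S.mu_finiteOnCompacts
    haveI : IsLocallyFiniteMeasure S.mu := inferInstance
    have hμrep : ∀ g : E → ℝ, Continuous g → HasCompactSupport g →
        ∫ x, g x ∂S.mu = S.LamE g := fun g hgc hgs => S.integral_eq_LamE hgc hgs
    refine ⟨S.mu, ⟨inferInstance, ?_⟩, ?_⟩
    · intro f hf
      rw [hμrep f (hCcont f hf) (hCsupp f hf), S.LamE_eq hf]
    · intro ν hν
      obtain ⟨hν1, hν2⟩ := hν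
      haveI := hν1
      haveI : IsFiniteMeasureOnCompacts ν := inferInstance
      have hνrep : ∀ g : E → ℝ, Continuous g → HasCompactSupport g →
          ∫ x, g x ∂ν = S.LamE g :=
        fun g hgc hgs => S.integral_eq_LamE_of_rep ν hν2 hgc hgs
      haveI : ν.Regular := inferInstance
      haveI : S.mu.Regular := inferInstance
      have hcompacts : ∀ K : Set E, IsCompact K → ν K = S.mu K := by
        intro K hK
        rw [hK.measure_eq_biInf_integral_hasCompactSupport ν,
          hK.measure_eq_biInf_integral_hasCompactSupport S.mu]
        refine iInf_congr fun g => iInf_congr fun hgc => iInf_congr fun hgs =>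
          iInf_congr fun hgK => iInf_congr fun hg0 => ?_
        rw [hνrep g hgc hgs, hμrep g hgc hgs]
      have hopen : ∀ U : Set E, IsOpen U → ν U = S.mu U := by
        intro U hU
        rw [hU.measure_eq_iSup_isCompact ν, hU.measure_eq_iSup_isCompact S.mu]
        exact iSup_congr fun K => iSup_congr fun _ => iSup_congr fun hK => hcompacts K hK
      refine Measure.ext fun s hs => ?_
      rw [Set.measure_eq_iInf_isOpen s ν, Set.measure_eq_iInf_isOpen s S.mu]
      exact iInf_congr fun U => iInf_congr fun _ => iInf_congr fun hU => hopen U hU
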